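/- Let G = (V, E) be a finite simple graph, let e₀ = uv ∈ E, and let x be a fractional matching of G. Let x̄ : E → ℝ agree with x on E ∖ {e₀} and satisfy x̄_{e₀} = 0. Let α ∈ (0,1] and suppose α·x̄ = Σ_{i ∈ I} λ_i χ^{M_i} is a convex combination (I finite, λ_i ≥ 0, Σ_{i ∈ I} λ_i = 1) of the indicator vectors of matchings M_i of G. Then Σ { λ_i : i ∈ I such that M_i covers u or M_i covers v } ≤ 2α·(1 − x_{e₀}). -/

import Mathlib

open Finset

/-- **Blocked fraction bound for matching.** If `α·x̄` (where `x̄` zeroes out the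
coordinate of `e₀ = uv` in a fractional matching `x`) is a convex combination of
indicator vectors of matchings `M_i`, then the total weight of the matchings covering
`u` or `v` is at most `2α(1 − x_{e₀})`. -/
theorem matching_blocked_fraction_bound
    {V : Type*} [Fintype V] [DecidableEq V]
    (G : SimpleGraph V) [DecidableRel G.Adj]
    (u v : V) (e₀ : {e : Sym2 V // e ∈ G.edgeFinset}) (he₀ : e₀.1 = s(u, v))
    (x : {e : Sym2 V // e ∈ G.edgeFinset} → ℝ)
    (hx0 : ∀ e, 0 ≤ x e) (hx1 : ∀ e, x e ≤ 1)
    (hxdeg : ∀ w : V,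
      ∑ e : {e : Sym2 V // e ∈ G.edgeFinset}, (if w ∈ e.1 then x e else 0) ≤ 1)
    (xbar : {e : Sym2 V // e ∈ G.edgeFinset} → ℝ)
    (hxbar : ∀ e, e ≠ e₀ → xbar e = x e) (hxbar0 : xbar e₀ = 0)
    (α : ℝ) (hα0 : 0 < α) (hα1 : α ≤ 1)
    {ι : Type*} (I : Finset ι) (lam : ι → ℝ) (M : ι → Finset (Sym2 V))
    (hME : ∀ i ∈ I, M i ⊆ G.edgeFinset)
    (hMmatch : ∀ i ∈ I, ∀ e ∈ M i, ∀ f ∈ M i, e ≠ f → ∀ w : V, w ∈ e → w ∉ f)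
    (hlam0 : ∀ i ∈ I, 0 ≤ lam i) (hlam1 : ∑ i ∈ I, lam i = 1)
    (hdecomp : ∀ e, α * xbar e = ∑ i ∈ I, lam i * (if e.1 ∈ M i then 1 else 0)) :
    ∑ i ∈ I.filter (fun i => (∃ e ∈ M i, u ∈ e) ∨ (∃ e ∈ M i, v ∈ e)), lam i ≤
      2 * α * (1 - x e₀) := by
  classical
  set N : V → ι → ℝ := fun w i =>
    ∑ e : {e : Sym2 V // e ∈ G.edgeFinset}, (if w ∈ e.1 ∧ e.1 ∈ M i then (1:ℝ) else 0)
    with hNdef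
  have hNnonneg : ∀ w i, 0 ≤ N w i := by
    intro w i
    rw [hNdef]
    refine Finset.sum_nonneg fun e _ => ?_
    split <;> norm_num
  have hNone : ∀ (w : V), ∀ i ∈ I, (∃ e ∈ M i, w ∈ e) → 1 ≤ N w i := by
    rintro w i hi ⟨e, heM, hwe⟩
    have heE : e ∈ G.edgeFinset := hME i hi heM
    rw [hNdef]
    have h1 : (1:ℝ) = (if w ∈ ((⟨e, heE⟩ : {e : Sym2 V // e ∈ G.edgeFinset}) : Sym2 V)
        ∧ ((⟨e, heE⟩ : {e : Sym2 V // e ∈ G.edgeFinset}) : Sym2 V) ∈ M i then (1:ℝ) else 0) := by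
      simp [hwe, heM]
    refine le_trans (le_of_eq h1) ?_
    exact Finset.single_le_sum
      (f := fun e : {e : Sym2 V // e ∈ G.edgeFinset} =>
        if w ∈ e.1 ∧ e.1 ∈ M i then (1:ℝ) else 0)
      (fun e _ => by split <;> norm_num) (Finset.mem_univ _)
  have hkey : ∀ w : V, ∑ i ∈ I, lam i * N w i
      = ∑ e : {e : Sym2 V // e ∈ G.edgeFinset}, (if w ∈ e.1 then α * xbar e else 0) := by
    intro w
    have hsw : ∀ i ∈ I, lam i * N w i
        = ∑ e : {e : Sym2 V // e ∈ G.edgeFinset},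
            (if w ∈ e.1 then lam i * (if e.1 ∈ M i then (1:ℝ) else 0) else 0) := by
      intro i _
      rw [hNdef]
      dsimp only
      rw [Finset.mul_sum]
      refine Finset.sum_congr rfl fun e _ => ?_
      by_cases h1 : w ∈ e.1 <;> by_cases h2 : e.1 ∈ M i <;> simp [h1, h2]
    rw [Finset.sum_congr rfl hsw, Finset.sum_comm]
    refine Finset.sum_congr rfl fun e _ => ?_
    by_cases h1 : w ∈ e.1
    · simp only [h1, if_true]
      exact (hdecomp e).symm
    · simp [h1]
  have hxw : ∀ w : V, w ∈ e₀.1 →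
      ∑ e : {e : Sym2 V // e ∈ G.edgeFinset}, (if w ∈ e.1 then α * xbar e else 0)
        ≤ α * (1 - x e₀) := by
    intro w hw
    have hsplit : ∑ e : {e : Sym2 V // e ∈ G.edgeFinset}, (if w ∈ e.1 then xbar e else 0)
        = (∑ e : {e : Sym2 V // e ∈ G.edgeFinset}, (if w ∈ e.1 then x e else 0)) - x e₀ := by
      rw [← Finset.add_sum_erase Finset.univ _ (Finset.mem_univ e₀),
          ← Finset.add_sum_erase Finset.univ
            (fun e : {e : Sym2 V // e ∈ G.edgeFinset} => if w ∈ e.1 then x e else 0)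
            (Finset.mem_univ e₀)]
      have h1 : (if w ∈ e₀.1 then xbar e₀ else 0) = 0 := by simp [hxbar0]
      have h2 : (if w ∈ e₀.1 then x e₀ else 0) = x e₀ := by simp [hw]
      rw [h1, h2]
      have h3 : ∑ e ∈ Finset.univ.erase e₀,
            (if w ∈ e.1 then xbar e else 0)
          = ∑ e ∈ Finset.univ.erase e₀, (if w ∈ e.1 then x e else 0) := by
        refine Finset.sum_congr rfl fun e he => ?_
        rw [hxbar e (Finset.ne_of_mem_erase he)]
      rw [h3]; ring
    have hsum : ∑ e : {e : Sym2 V // e ∈ G.edgeFinset}, (if w ∈ e.1 then α * xbar e else 0)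
        = α * ((∑ e : {e : Sym2 V // e ∈ G.edgeFinset}, (if w ∈ e.1 then x e else 0)) - x e₀) := by
      rw [← hsplit, Finset.mul_sum]
      refine Finset.sum_congr rfl fun e _ => ?_
      split <;> simp
    rw [hsum]
    have := hxdeg w
    apply mul_le_mul_of_nonneg_left _ (le_of_lt hα0)
    linarith
  have hu : u ∈ e₀.1 := by rw [he₀]; simp
  have hv : v ∈ e₀.1 := by rw [he₀]; simp
  have hfinal : ∑ i ∈ I.filter (fun i => (∃ e ∈ M i, u ∈ e) ∨ (∃ e ∈ M i, v ∈ e)), lam i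
      ≤ ∑ i ∈ I, lam i * (N u i + N v i) := by
    calc ∑ i ∈ I.filter (fun i => (∃ e ∈ M i, u ∈ e) ∨ (∃ e ∈ M i, v ∈ e)), lam i
        ≤ ∑ i ∈ I.filter (fun i => (∃ e ∈ M i, u ∈ e) ∨ (∃ e ∈ M i, v ∈ e)),
            lam i * (N u i + N v i) := by
          refine Finset.sum_le_sum fun i hi => ?_
          obtain ⟨hiI, hcov⟩ := Finset.mem_filter.mp hi
          have h1 : (1:ℝ) ≤ N u i + N v i := by
            rcases hcov with h | h
            · have := hNone u i hiI h; have := hNnonneg v i; linarith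
            · have := hNone v i hiI h; have := hNnonneg u i; linarith
          have := hlam0 i hiI
          nlinarith
      _ ≤ ∑ i ∈ I, lam i * (N u i + N v i) := by
          refine Finset.sum_le_sum_of_subset_of_nonneg (Finset.filter_subset _ _)
            fun i hi _ => ?_
          have := hlam0 i hi
          have := hNnonneg u i
          have := hNnonneg v i
          nlinarith
  have hexp : ∑ i ∈ I, lam i * (N u i + N v i)
      = (∑ i ∈ I, lam i * N u i) + ∑ i ∈ I, lam i * N v i := by
    rw [← Finset.sum_add_distrib]
    exact Finset.sum_congr rfl fun i _ => by ring
  have h1 := (hkey u) ▸ hxw u hu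
  have h2 := (hkey v) ▸ hxw v hv
  calc ∑ i ∈ I.filter (fun i => (∃ e ∈ M i, u ∈ e) ∨ (∃ e ∈ M i, v ∈ e)), lam i
      ≤ ∑ i ∈ I, lam i * (N u i + N v i) := hfinal
    _ = (∑ i ∈ I, lam i * N u i) + ∑ i ∈ I, lam i * N v i := hexp
    _ ≤ α * (1 - x e₀) + α * (1 - x e₀) := add_le_add h1 h2
    _ = 2 * α * (1 - x e₀) := by ring
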